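/- Let Ω ⊆ ℝⁿ be a domain (a nonempty open set), let μ : Ω → ℝ be a (Lebesgue) measurable function that is finite everywhere, and let f : ℝ → ℝ be a continuous function whose image contains the image of μ, i.e., Im(f) ⊇ Im(μ). Then there exists a (Lebesgue) measurable function q : Ω → ℝ such that f(q(x)) = μ(x) for all x ∈ Ω. -/

import Mathlib

open MeasureTheory Set

section Aux

variable {f : ℝ → ℝ} (hf : Continuous f)

/-- For each `k`, a candidate partial inverse: the infimum of
`f ⁻¹' {y} ∩ [-k, k]`, with the safety point `k` added so the set is
always nonempty. -/
noncomputable def auxInv (f : ℝ → ℝ) (k : ℕ) (y : ℝ) : ℝ :=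
  sInf ((f ⁻¹' {y} ∩ Icc (-(k : ℝ)) k) ∪ {(k : ℝ)})


lemma auxInv_bddBelow (f : ℝ → ℝ) (k : ℕ) (y : ℝ) :
    BddBelow ((f ⁻¹' {y} ∩ Icc (-(k : ℝ)) k) ∪ {(k : ℝ)}) := by
  refine ⟨-(k : ℝ), ?_⟩
  rintro t (⟨-, ht⟩ | ht)
  · exact ht.1
  · rw [Set.mem_singleton_iff] at ht
    subst ht
    simp [neg_le_self_iff, Nat.cast_nonneg]

lemma auxInv_mem (hf : Continuous f) (k : ℕ) (y : ℝ) :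
    auxInv f k y ∈ (f ⁻¹' {y} ∩ Icc (-(k : ℝ)) k) ∪ {(k : ℝ)} := by
  apply IsClosed.csInf_mem
  · exact ((isClosed_singleton.preimage hf).inter isClosed_Icc).union isClosed_singleton
  · exact ⟨(k : ℝ), Or.inr rfl⟩
  · exact auxInv_bddBelow f k y

lemma auxInv_spec (hf : Continuous f) (k : ℕ) {y : ℝ}
    (hy : y ∈ f '' Icc (-(k : ℝ)) k) : f (auxInv f k y) = y := by
  obtain ⟨t, ht, hft⟩ := hy
  rcases auxInv_mem hf k y with h | h
  · exact h.1
  · rw [mem_singleton_iff] at h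
    -- auxInv = k; but sInf ≤ t ≤ k, so t = k and f k = y
    have h1 : auxInv f k y ≤ t := by
      exact csInf_le (auxInv_bddBelow f k y) (Or.inl ⟨hft, ht⟩)
    have h2 : t ≤ (k : ℝ) := ht.2
    have : t = (k : ℝ) := le_antisymm h2 (h ▸ h1)
    rw [h, ← this, hft]

lemma measurable_auxInv (hf : Continuous f) (k : ℕ) : Measurable (auxInv f k) := by
  apply measurable_of_Iic
  intro a
  have key : auxInv f k ⁻¹' Iic a =
      f '' (Icc (-(k : ℝ)) k ∩ Iic a) ∪ (if (k : ℝ) ≤ a then univ else (∅ : Set ℝ)) := by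
    ext y
    simp only [mem_preimage, mem_Iic, mem_union]
    constructor
    · intro h
      rcases auxInv_mem hf k y with hm | hm
      · exact Or.inl ⟨auxInv f k y, ⟨hm.2, h⟩, hm.1⟩
      · rw [mem_singleton_iff] at hm
        right
        rw [if_pos (hm ▸ h)]
        trivial
    · rintro (⟨t, ⟨ht, hta⟩, hft⟩ | h)
      · calc auxInv f k y ≤ t := by
              exact csInf_le (auxInv_bddBelow f k y) (Or.inl ⟨hft, ht⟩)
          _ ≤ a := hta
      · by_cases hk : (k : ℝ) ≤ a
        · calc auxInv f k y ≤ (k : ℝ) := by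
                exact csInf_le (auxInv_bddBelow f k y) (Or.inr rfl)
            _ ≤ a := hk
        · rw [if_neg hk] at h
          exact absurd h (notMem_empty y)
  rw [key]
  apply MeasurableSet.union
  · exact ((isCompact_Icc.inter_right isClosed_Iic).image hf).measurableSet
  · split <;> simp

end Aux

set_option maxHeartbeats 1000000 in
/-- Let `Ω ⊆ ℝⁿ` be a domain (nonempty open set), `μ : Ω → ℝ` a
Lebesgue measurable function (finite everywhere, being real-valued), and
`f : ℝ → ℝ` a continuous function with `Im(f) ⊇ Im(μ)`. Then there is a Lebesgue
measurable `q : Ω → ℝ` with `f (q x) = μ x` for all `x ∈ Ω`. Lebesgue measurability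
on `Ω` is expressed as null-measurability with respect to the Lebesgue measure
restricted to `Ω`. -/
theorem stmt4 (n : ℕ) (Ω : Set (Fin n → ℝ)) (hΩo : IsOpen Ω) (hΩne : Ω.Nonempty)
    (μ : (Fin n → ℝ) → ℝ) (hμ : NullMeasurable μ (volume.restrict Ω))
    (f : ℝ → ℝ) (hf : Continuous f) (him : μ '' Ω ⊆ Set.range f) :
    ∃ q : (Fin n → ℝ) → ℝ, NullMeasurable q (volume.restrict Ω) ∧
      ∀ x ∈ Ω, f (q x) = μ x := by
  classical
  set A : ℕ → Set ℝ := fun k => f '' Icc (-(k : ℝ)) k with hA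
  have hAmeas : ∀ k, MeasurableSet (A k) := fun k =>
    (isCompact_Icc.image hf).measurableSet
  -- every point of the range is in some A k
  have hcover : ∀ y ∈ Set.range f, ∃ k, y ∈ A k := by
    rintro y ⟨t, rfl⟩
    refine ⟨⌈|t|⌉₊, t, ?_, rfl⟩
    have := Nat.le_ceil |t|
    constructor
    · linarith [neg_abs_le t]
    · linarith [le_abs_self t]
  set B : ℕ → Set ℝ := fun k => A k \ (⋃ j ∈ Finset.range k, A j) with hB
  have hBmeas : ∀ k, MeasurableSet (B k) := fun k =>
    (hAmeas k).diff (MeasurableSet.biUnion (Finset.range k).countable_toSet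
      fun j _ => hAmeas j)
  set g : ℝ → ℝ := fun y =>
    if h : ∃ k, y ∈ A k then auxInv f (Nat.find h) y else 0 with hg
  -- pointwise limit description of g
  have hlim : ∀ y, Filter.Tendsto
      (fun N => ∑ k ∈ Finset.range N, (B k).indicator (auxInv f k) y)
      Filter.atTop (nhds (g y)) := by
    intro y
    by_cases h : ∃ k, y ∈ A k
    · set k₀ := Nat.find h with hk₀
      have hyB : y ∈ B k₀ := by
        refine ⟨Nat.find_spec h, ?_⟩
        simp only [Set.mem_iUnion, Finset.mem_range, not_exists]
        intro j hj
        exact fun hyj => Nat.find_min h hj hyj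
      have heq : ∀ N ≥ k₀ + 1,
          (∑ k ∈ Finset.range N, (B k).indicator (auxInv f k) y) = g y := by
        intro N hN
        have : ∀ k ∈ Finset.range N, k ≠ k₀ → (B k).indicator (auxInv f k) y = 0 := by
          intro k _ hk
          apply Set.indicator_of_notMem
          intro hyk
          rcases lt_or_gt_of_ne hk with hlt | hgt
          · exact Nat.find_min h hlt hyk.1
          · apply hyk.2
            simp only [Set.mem_iUnion, Finset.mem_range]
            exact ⟨k₀, hgt, Nat.find_spec h⟩
        rw [Finset.sum_eq_single_of_mem k₀ (Finset.mem_range.mpr hN) this]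
        rw [Set.indicator_of_mem hyB, hg]
        simp only [dif_pos h]
        rfl
      refine Filter.Tendsto.congr' ?_ tendsto_const_nhds
      filter_upwards [Filter.eventually_ge_atTop (k₀ + 1)] with N hN
      exact (heq N hN).symm
    · have : ∀ N, (∑ k ∈ Finset.range N, (B k).indicator (auxInv f k) y) = g y := by
        intro N
        rw [hg]
        simp only [dif_neg h]
        apply Finset.sum_eq_zero
        intro k _
        apply Set.indicator_of_notMem
        exact fun hyk => h ⟨k, hyk.1⟩
      simp only [this]
      exact tendsto_const_nhds
  have hgmeas : Measurable g := by
    apply measurable_of_tendsto_metrizable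
      (f := fun N y => ∑ k ∈ Finset.range N, (B k).indicator (auxInv f k) y)
    · intro N
      apply Finset.measurable_sum
      intro k _
      exact (measurable_auxInv hf k).indicator (hBmeas k)
    · exact tendsto_pi_nhds.mpr hlim
  refine ⟨g ∘ μ, MeasureTheory.Measurable.comp_nullMeasurable hgmeas hμ, ?_⟩
  intro x hx
  have hmem : μ x ∈ Set.range f := him ⟨x, hx, rfl⟩
  obtain ⟨k, hk⟩ := hcover _ hmem
  have h : ∃ k, μ x ∈ A k := ⟨k, hk⟩
  show f (g (μ x)) = μ x
  rw [hg]
  simp only [dif_pos h]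
  exact auxInv_spec hf (Nat.find h) (Nat.find_spec h)
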